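/- For every infinite set $A$ and every $n \ge 2$, there is an explicit non-injective surjection from $\mathrm{fin}(A)^n$ onto $[\mathrm{fin}(A)]^n$ (the set of $n$-element subsets of $\mathrm{fin}(A)$), constructed without the axiom of choice. -/

import Mathlib

/-- For every infinite set `A` and `n ≥ 2`, there is a non-injective
surjection from `fin(A)ⁿ` onto `[fin(A)]ⁿ`. -/
theorem stmt_14 (A : Type) [Infinite A] (n : ℕ) (hn : 2 ≤ n) :
    ∃ f : (Fin n → Finset A) → {s : Finset (Finset A) // s.card = n},
      Function.Surjective f ∧ ¬ Function.Injective f := by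
  classical
  obtain ⟨s0, hs0⟩ := Infinite.exists_subset_card_eq (Finset A) n
  refine ⟨fun g => if h : (Finset.image g Finset.univ).card = n
      then ⟨Finset.image g Finset.univ, h⟩ else ⟨s0, hs0⟩, ?_, ?_⟩
  · rintro ⟨s, hs⟩
    refine ⟨fun i => s.equivFin.symm (Fin.cast hs.symm i), ?_⟩
    have himg : Finset.image (fun i => (s.equivFin.symm (Fin.cast hs.symm i) : Finset A))
        Finset.univ = s := by
      ext x
      simp only [Finset.mem_image, Finset.mem_univ, true_and]
      constructor
      · rintro ⟨i, rfl⟩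
        exact (s.equivFin.symm _).2
      · intro hx
        exact ⟨Fin.cast hs (s.equivFin ⟨x, hx⟩), by simp⟩
    simp [himg, hs]
  · intro hinj
    have h1 : ∀ c : Finset A,
        (Finset.image (Function.const (Fin n) c) Finset.univ).card ≠ n := by
      intro c
      have : Finset.image (Function.const (Fin n) c) Finset.univ ⊆ {c} := by
        intro x hx; simp at hx; obtain ⟨_, rfl⟩ := hx; simp
      have := Finset.card_le_card this
      simp at this
      omega
    obtain ⟨a⟩ := (inferInstance : Nonempty A)
    have := hinj (a₁ := Function.const (Fin n) ∅)
      (a₂ := Function.const (Fin n) {a}) (by simp [h1 ∅, h1 {a}])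
    have h0 : (0 : ℕ) < n := by omega
    have := congrFun this ⟨0, h0⟩
    simp [Function.const] at this
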